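/- Consider the regression y_t = x_t'β + ε_t for t = 1,…,n, where ε_t are i.i.d. mean-zero with variance σ², the regressors satisfy x_t = (1, x̃_t') with (1/n)Σ_{t=1}^{⌊nr⌋} x_t → (r,0,…,0) and (1/n)Σ x_t x_t' → Q block-diagonal and invertible, and β̂_n is the OLS estimator with √n(β̂_n − β) = O_p(1). Then uniformly in r ∈ [0,1], (1/√n)Σ_{t=1}^{⌊nr⌋} x_t'(β̂_n − β) = (r/√n)Σ_{t=1}^{n} ε_t + o_p(1). -/

import Mathlib

open MeasureTheory ProbabilityTheory Filter

/-- If `a n / n → 0`, then the running sup `max_{m ≤ n} |a m|` is `o(n)`. -/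
lemma cusum_aux_sup (a : ℕ → ℝ)
    (ha : Tendsto (fun n : ℕ => a n / n) atTop (nhds 0)) {e : ℝ} (he : 0 < e) :
    ∀ᶠ n : ℕ in atTop, ∀ m ≤ n, |a m| ≤ e * n := by
  rw [Metric.tendsto_atTop] at ha
  obtain ⟨N, hN⟩ := ha e he
  set N' := max N 1 with hN'
  set C := ∑ m ∈ Finset.range N', |a m| with hC
  have hC0 : 0 ≤ C := Finset.sum_nonneg fun m _ => abs_nonneg _
  filter_upwards [eventually_ge_atTop N', eventually_ge_atTop ⌈C / e⌉₊] with n hn1 hn2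
  intro m hm
  have hne : (0:ℝ) ≤ n := Nat.cast_nonneg n
  rcases lt_or_ge m N' with hmN | hmN
  · have h1 : |a m| ≤ C := by
      exact Finset.single_le_sum (f := fun m => |a m|) (fun i _ => abs_nonneg _)
        (Finset.mem_range.mpr hmN)
    have h2 : (⌈C / e⌉₊ : ℝ) ≤ n := Nat.cast_le.mpr hn2
    have h3 : C / e ≤ n := le_trans (Nat.le_ceil _) h2
    have := (div_le_iff₀ he).mp h3
    linarith [this]
  · have hm1 : 1 ≤ m := le_trans (le_max_right N 1) hmN
    have hmr : (0:ℝ) < m := by exact_mod_cast hm1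
    have := hN m (le_trans (le_max_left N 1) hmN)
    rw [Real.dist_eq, sub_zero, abs_div] at this
    have h4 : |a m| < e * m := by
      rw [div_lt_iff₀ (by simpa using hmr)] at this
      simpa [abs_of_pos hmr] using this
    have h5 : (m:ℝ) ≤ n := Nat.cast_le.mpr hm
    nlinarith

/-- Asymptotic reduction of the CUSUM of fitted values to the CUSUM of innovations:
in the linear regression `y_t = x_t'β + ε_t` with intercept, Cesàro-negligible
non-constant regressors, `(1/n) Σ x_t x_t' → Q` block-diagonal invertible, OLS
estimator `β̂_n` with `√n(β̂_n − β) = O_p(1)`, one has uniformly in `r ∈ [0,1]`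
`(1/√n) Σ_{t≤⌊nr⌋} x_t'(β̂_n − β) = (r/√n) Σ_{t≤n} ε_t + o_p(1)`. -/
theorem cusum_regression_reduction
    {Ω : Type*} [MeasurableSpace Ω] (P : Measure Ω) [IsProbabilityMeasure P]
    {K : ℕ} (x : ℕ → Fin (K + 1) → ℝ) (β : Fin (K + 1) → ℝ)
    (ε : ℕ → Ω → ℝ) (σ : ℝ) (hσ : 0 < σ)
    (y : ℕ → Ω → ℝ) (hy : ∀ t ω, y t ω = (∑ j, x t j * β j) + ε t ω)
    (hconst : ∀ t, x t 0 = 1)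
    (hmeas : ∀ t, Measurable (ε t))
    (hindep : iIndepFun ε P)
    (hident : ∀ t, P.map (ε t) = P.map (ε 0))
    (hint : Integrable (ε 0) P) (hmean : ∫ ω, ε 0 ω ∂P = 0)
    (hvar : ∫ ω, (ε 0 ω) ^ 2 ∂P = σ ^ 2)
    (hcesaro : ∀ r ∈ Set.Icc (0 : ℝ) 1, ∀ i : Fin (K + 1),
      Tendsto (fun n : ℕ => (∑ t ∈ Finset.range ⌊(n : ℝ) * r⌋₊, x t i) / (n : ℝ))
        atTop (nhds (if i = 0 then r else 0)))
    (Q : Matrix (Fin (K + 1)) (Fin (K + 1)) ℝ)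
    (hQinv : IsUnit Q.det)
    (hQblock : ∀ i : Fin (K + 1), i ≠ 0 → Q 0 i = 0 ∧ Q i 0 = 0)
    (hQlim : ∀ i j : Fin (K + 1),
      Tendsto (fun n : ℕ => (∑ t ∈ Finset.range n, x t i * x t j) / (n : ℝ))
        atTop (nhds (Q i j)))
    (βhat : ℕ → Ω → Fin (K + 1) → ℝ)
    (hOLS : ∀ n ω i, ∑ t ∈ Finset.range n,
      x t i * (y t ω - ∑ j, x t j * βhat n ω j) = 0)
    (hOp : ∀ η : ℝ, 0 < η → ∃ M : ℝ, 0 < M ∧ ∀ n : ℕ,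
      P {ω | M ≤ Real.sqrt n * ‖βhat n ω - β‖} ≤ ENNReal.ofReal η) :
    ∀ δ : ℝ, 0 < δ →
      Tendsto (fun n : ℕ =>
          P {ω | ∃ r ∈ Set.Icc (0 : ℝ) 1, δ ≤
            |((∑ t ∈ Finset.range ⌊(n : ℝ) * r⌋₊,
                  ∑ j, x t j * (βhat n ω j - β j))
                - r * ∑ t ∈ Finset.range n, ε t ω)| / Real.sqrt n})
        atTop (nhds 0) := by
  intro δ hδ
  -- Step 1: the uniform deterministic bound on the coefficients
  have hc : ∀ e : ℝ, 0 < e → ∀ᶠ n : ℕ in atTop, ∀ r ∈ Set.Icc (0:ℝ) 1,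
      ∑ j, |(∑ t ∈ Finset.range ⌊(n : ℝ) * r⌋₊, x t j)
          - r * ∑ t ∈ Finset.range n, x t j| ≤ e * n := by
    intro e he
    set e1 := e / (2 * (K + 1)) with he1def
    have he1 : 0 < e1 := by positivity
    have hj : ∀ j : Fin (K + 1), ∀ᶠ n : ℕ in atTop, ∀ r ∈ Set.Icc (0:ℝ) 1,
        |(∑ t ∈ Finset.range ⌊(n : ℝ) * r⌋₊, x t j)
          - r * ∑ t ∈ Finset.range n, x t j| ≤ 2 * e1 * n := by
      intro j
      by_cases hj0 : j = 0
      · subst hj0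
        -- the coefficient is ⌊nr⌋ - r n, bounded by 1
        filter_upwards [eventually_ge_atTop ⌈1 / (2 * e1)⌉₊] with n hn r hr
        have hnr0 : (0:ℝ) ≤ (n:ℝ) * r := mul_nonneg (Nat.cast_nonneg n) hr.1
        have hfl : (⌊(n : ℝ) * r⌋₊ : ℝ) ≤ (n:ℝ) * r := Nat.floor_le hnr0
        have hfl2 : (n:ℝ) * r < ⌊(n : ℝ) * r⌋₊ + 1 := Nat.lt_floor_add_one _
        have hsum1 : (∑ t ∈ Finset.range ⌊(n : ℝ) * r⌋₊, x t 0)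
            = (⌊(n : ℝ) * r⌋₊ : ℝ) := by simp [hconst]
        have hsum2 : (∑ t ∈ Finset.range n, x t 0) = (n:ℝ) := by simp [hconst]
        rw [hsum1, hsum2]
        have habs : |(⌊(n : ℝ) * r⌋₊:ℝ) - r * (n:ℝ)| ≤ 1 := by
          rw [abs_le]; constructor <;> nlinarith
        have hone : (1:ℝ) ≤ 2 * e1 * n := by
          have h2 : (⌈1 / (2 * e1)⌉₊ : ℝ) ≤ n := Nat.cast_le.mpr hn
          have h3 : 1 / (2 * e1) ≤ (n:ℝ) := le_trans (Nat.le_ceil _) h2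
          rw [div_le_iff₀ (by positivity)] at h3
          linarith
        linarith
      · -- use the Cesàro hypothesis at r = 1 plus the running-sup lemma
        have h1 := hcesaro 1 (by constructor <;> norm_num) j
        simp only [mul_one, Nat.floor_natCast, hj0, if_neg hj0] at h1
        have := cusum_aux_sup (fun m => ∑ t ∈ Finset.range m, x t j) h1 he1
        filter_upwards [this] with n hn r hr
        have hfl : ⌊(n : ℝ) * r⌋₊ ≤ n := by
          have : (n:ℝ) * r ≤ (n:ℝ) := by
            nlinarith [hr.1, hr.2, (Nat.cast_nonneg n : (0:ℝ) ≤ n)]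
          calc ⌊(n : ℝ) * r⌋₊ ≤ ⌊(n:ℝ)⌋₊ := Nat.floor_le_floor this
            _ = n := Nat.floor_natCast n
        have b1 := hn ⌊(n : ℝ) * r⌋₊ hfl
        have b2 := hn n le_rfl
        have : |r * ∑ t ∈ Finset.range n, x t j| ≤ e1 * n := by
          rw [abs_mul]
          have : |r| ≤ 1 := abs_le.mpr ⟨by linarith [hr.1], hr.2⟩
          nlinarith [abs_nonneg (∑ t ∈ Finset.range n, x t j)]
        calc |(∑ t ∈ Finset.range ⌊(n : ℝ) * r⌋₊, x t j)
              - r * ∑ t ∈ Finset.range n, x t j|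
            ≤ |∑ t ∈ Finset.range ⌊(n : ℝ) * r⌋₊, x t j|
              + |r * ∑ t ∈ Finset.range n, x t j| := abs_sub _ _
          _ ≤ e1 * n + e1 * n := by linarith
          _ = 2 * e1 * n := by ring
    rw [← eventually_all] at hj
    filter_upwards [hj] with n hn r hr
    calc ∑ j, |(∑ t ∈ Finset.range ⌊(n : ℝ) * r⌋₊, x t j)
            - r * ∑ t ∈ Finset.range n, x t j|
        ≤ ∑ _j : Fin (K+1), 2 * e1 * n :=
          Finset.sum_le_sum fun j _ => hn j r hr
      _ = (K + 1 : ℝ) * (2 * e1 * n) := by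
          rw [Finset.sum_const, Finset.card_univ, Fintype.card_fin]
          push_cast; ring
      _ = e * n := by rw [he1def]; field_simp
  -- Step 2: key OLS identity
  have hkey : ∀ n ω, ∑ t ∈ Finset.range n, ε t ω
      = ∑ t ∈ Finset.range n, ∑ j, x t j * (βhat n ω j - β j) := by
    intro n ω
    have h := hOLS n ω 0
    simp only [hconst, one_mul, hy] at h
    have h2 : ∑ t ∈ Finset.range n,
        (ε t ω - ∑ j, x t j * (βhat n ω j - β j)) = 0 := by
      rw [← h]
      refine Finset.sum_congr rfl fun t _ => ?_
      simp only [mul_sub, Finset.sum_sub_distrib]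
      ring
    rw [Finset.sum_sub_distrib, sub_eq_zero] at h2
    exact h2
  -- Step 3: conclude
  rw [ENNReal.tendsto_nhds_zero]
  intro E hE
  set η := (min 1 E).toReal with hη
  have hη0 : 0 < η := by
    rw [hη]
    apply ENNReal.toReal_pos
    · simp only [ne_eq, min_eq_iff]
      push_neg
      constructor <;> intro h <;> simp_all [hE.ne']
    · exact ne_top_of_le_ne_top (by norm_num) (min_le_left _ _)
  have hηE : ENNReal.ofReal η ≤ E := by
    rw [hη, ENNReal.ofReal_toReal (ne_top_of_le_ne_top (by norm_num) (min_le_left 1 E))]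
    exact min_le_right _ _
  obtain ⟨M, hM, hMb⟩ := hOp η hη0
  have he : 0 < δ / (2 * M) := by positivity
  filter_upwards [hc (δ / (2 * M)) he, eventually_ge_atTop 1] with n hn hn1
  refine le_trans (le_trans (measure_mono ?_) (hMb n)) hηE
  intro ω hω
  obtain ⟨r, hr, hδr⟩ := hω
  set s := Real.sqrt n with hs
  have hsn : (0:ℝ) < n := by exact_mod_cast hn1
  have hs0 : 0 < s := Real.sqrt_pos.mpr hsn
  have hss : s * s = n := Real.mul_self_sqrt (le_of_lt hsn)
  set v : Fin (K + 1) → ℝ := fun j => βhat n ω j - β j with hv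
  -- the identity
  have hD : (∑ t ∈ Finset.range ⌊(n : ℝ) * r⌋₊, ∑ j, x t j * v j)
      - r * ∑ t ∈ Finset.range n, ε t ω
      = ∑ j, ((∑ t ∈ Finset.range ⌊(n : ℝ) * r⌋₊, x t j)
          - r * ∑ t ∈ Finset.range n, x t j) * v j := by
    rw [hkey n ω]
    rw [Finset.sum_comm, Finset.sum_comm (s := Finset.range n)]
    rw [Finset.mul_sum, ← Finset.sum_sub_distrib]
    refine Finset.sum_congr rfl fun j _ => ?_
    simp only [← Finset.sum_mul]
    ring
  -- the bound
  have hvj : ∀ j, |v j| ≤ ‖βhat n ω - β‖ := by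
    intro j
    have := norm_le_pi_norm (βhat n ω - β) j
    simpa [Real.norm_eq_abs, Pi.sub_apply, hv] using this
  have hnorm0 : 0 ≤ ‖βhat n ω - β‖ := norm_nonneg _
  have hbound : |(∑ t ∈ Finset.range ⌊(n : ℝ) * r⌋₊, ∑ j, x t j * v j)
      - r * ∑ t ∈ Finset.range n, ε t ω|
      ≤ (δ / (2 * M)) * n * ‖βhat n ω - β‖ := by
    rw [hD]
    calc |∑ j, ((∑ t ∈ Finset.range ⌊(n : ℝ) * r⌋₊, x t j)
            - r * ∑ t ∈ Finset.range n, x t j) * v j|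
        ≤ ∑ j, |((∑ t ∈ Finset.range ⌊(n : ℝ) * r⌋₊, x t j)
            - r * ∑ t ∈ Finset.range n, x t j) * v j| :=
          Finset.abs_sum_le_sum_abs _ _
      _ ≤ ∑ j, |(∑ t ∈ Finset.range ⌊(n : ℝ) * r⌋₊, x t j)
            - r * ∑ t ∈ Finset.range n, x t j| * ‖βhat n ω - β‖ := by
          refine Finset.sum_le_sum fun j _ => ?_
          rw [abs_mul]
          exact mul_le_mul_of_nonneg_left (hvj j) (abs_nonneg _)
      _ = (∑ j, |(∑ t ∈ Finset.range ⌊(n : ℝ) * r⌋₊, x t j)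
            - r * ∑ t ∈ Finset.range n, x t j|) * ‖βhat n ω - β‖ := by
          rw [Finset.sum_mul]
      _ ≤ (δ / (2 * M)) * n * ‖βhat n ω - β‖ :=
          mul_le_mul_of_nonneg_right (hn r hr) hnorm0
  -- finish: δ ≤ |D|/s and |D| ≤ (δ/2M) n ‖v‖ give M ≤ s ‖v‖
  have h1 : δ * s ≤ (δ / (2 * M)) * n * ‖βhat n ω - β‖ := by
    have := (le_div_iff₀ hs0).mp hδr
    linarith [hbound, this]
  show M ≤ s * ‖βhat n ω - β‖
  have hds : 0 < δ * s := mul_pos hδ hs0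
  have h2 : δ * s * (2 * M) ≤ δ * s * (s * ‖βhat n ω - β‖) := by
    calc δ * s * (2 * M) ≤ ((δ / (2 * M)) * n * ‖βhat n ω - β‖) * (2 * M) :=
        mul_le_mul_of_nonneg_right h1 (by positivity)
      _ = δ * s * (s * ‖βhat n ω - β‖) := by rw [← hss]; field_simp
  have h3 : 2 * M ≤ s * ‖βhat n ω - β‖ := le_of_mul_le_mul_left h2 hds
  linarith
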